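/- Let p be an odd prime and let G be a finite group that is a 𝒫₀(p)-group with respect to a pair (ρ,τ). Then G = ⟨[ρ,τ], ρ⟩, the subgroup generated by the commutator [ρ,τ] and ρ. -/

import Mathlib

open Pointwise

/-- A group is cyclic or dihedral. -/
def IsCyclicOrDihedral (H : Type*) [Group H] : Prop :=
  IsCyclic H ∨ ∃ n : ℕ, 0 < n ∧ Nonempty (H ≃* DihedralGroup n)

/-- `G` is a `𝒫₀(p)`-group with respect to `(ρ, τ)`. -/
def IsP0 (p : ℕ) {G : Type*} [Group G] (ρ τ : G) : Prop :=
  orderOf τ = 2 ∧ Subgroup.closure {ρ, τ} = ⊤ ∧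
    ∃ n : ℕ, 0 < n ∧
      Nat.card G / orderOf ρ +
          Nat.card G / Nat.card (Subgroup.closure {τ, ρ⁻¹ * τ * ρ} : Subgroup G) +
          p ^ n =
        Nat.card G / 2

/-- `G` is a `𝒫₁(p)`-group with respect to subgroups `H₁` and `H₂`. -/
def IsP1With (p : ℕ) {G : Type*} [Group G] (H₁ H₂ : Subgroup G) : Prop :=
  IsCyclicOrDihedral H₁ ∧ IsCyclicOrDihedral H₂ ∧
    ∃ n : ℕ, Nat.card G = p ^ n * Nat.lcm (Nat.card H₁) (Nat.card H₂)

/-- `G` is a `𝒫₁(p)`-group. -/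
def IsP1 (p : ℕ) (G : Type*) [Group G] : Prop :=
  ∃ H₁ H₂ : Subgroup G, IsP1With p H₁ H₂

/-- `G` is a `𝒫₁⁺(p)`-group with respect to `(ρ, τ)`. -/
def IsP1Plus (p : ℕ) {G : Type*} [Group G] (ρ τ : G) : Prop :=
  orderOf τ ≤ 2 ∧ Subgroup.closure {ρ, τ} = ⊤ ∧
    (Odd p → Subgroup.closure {ρ⁻¹ * τ⁻¹ * ρ * τ, ρ} = ⊤) ∧
    IsP1With p (Subgroup.closure {τ, ρ⁻¹ * τ * ρ}) (Subgroup.zpowers ρ)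

/-- `G` is a `𝒫₂(p)`-group. -/
def IsP2 (p : ℕ) (G : Type*) [Group G] : Prop :=
  ∀ r : ℕ, r.Prime → r ≠ p → ∀ S : Sylow r G, IsCyclicOrDihedral (S : Subgroup G)

/-- `G` is a `𝒫₂⁺(p)`-group with respect to `(ρ, τ)`. -/
def IsP2Plus (p : ℕ) {G : Type*} [Group G] (ρ τ : G) : Prop :=
  orderOf τ ≤ 2 ∧ Subgroup.closure {ρ, τ} = ⊤ ∧
    (Odd p → Subgroup.closure {ρ⁻¹ * τ⁻¹ * ρ * τ, ρ} = ⊤) ∧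
    IsP2 p G

/-- A Hall `{2,3}`-subgroup. -/
def IsHall23 {G : Type*} [Group G] (H : Subgroup G) : Prop :=
  (∃ i j : ℕ, Nat.card H = 2 ^ i * 3 ^ j) ∧ Nat.Coprime H.index 6

/-- A Hall `{2,3}'`-subgroup. -/
def IsHall23' {G : Type*} [Group G] (K : Subgroup G) : Prop :=
  Nat.Coprime (Nat.card K) 6 ∧ ∃ i j : ℕ, K.index = 2 ^ i * 3 ^ j

/-- The projective special linear group of degree 2 over `R`. -/
abbrev ProjSL2 (R : Type*) [CommRing R] : Type _ :=
  Matrix.SpecialLinearGroup (Fin 2) R ⧸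
    Subgroup.center (Matrix.SpecialLinearGroup (Fin 2) R)

/-- The projective general linear group of degree 2 over `R`. -/
abbrev ProjGL2 (R : Type*) [CommRing R] : Type _ :=
  Matrix.GeneralLinearGroup (Fin 2) R ⧸
    Subgroup.center (Matrix.GeneralLinearGroup (Fin 2) R)


open Equiv Equiv.Perm Subgroup

section RegularSign
variable {Γ : Type*} [Group Γ] [Fintype Γ] [DecidableEq Γ]

private def regularSign (Γ : Type*) [Group Γ] [Fintype Γ] [DecidableEq Γ] : Γ →* ℤˣ where
  toFun x := Equiv.Perm.sign (Equiv.mulRight x)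
  map_one' := by
    have : (Equiv.mulRight (1 : Γ)) = Equiv.refl Γ := Equiv.ext fun a => mul_one a
    rw [this, Equiv.Perm.sign_refl]
  map_mul' x y := by
    have : (Equiv.mulRight (x * y)) = Equiv.mulRight y * Equiv.mulRight x :=
      Equiv.ext fun a => (mul_assoc a x y).symm
    rw [this, map_mul, mul_comm]

private lemma regularSign_apply_mulequiv (α : Γ ≃* Γ) (x : Γ) :
    regularSign Γ (α x) = regularSign Γ x := by
  have h : ((α.toEquiv.symm.trans (Equiv.mulRight x)).trans α.toEquiv) = Equiv.mulRight (α x) :=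
    Equiv.ext fun a => by
      simp [map_mul]
  show Equiv.Perm.sign (Equiv.mulRight (α x)) = Equiv.Perm.sign (Equiv.mulRight x)
  rw [← h, Equiv.Perm.sign_symm_trans_trans]

end RegularSign


private lemma finRotate_val {n : ℕ} (k : ℕ) (hn : n = k + 1) (i : Fin n) :
    ((finRotate n i : Fin n) : ℕ) = ((i : ℕ) + 1) % n := by
  subst hn
  rw [finRotate_succ_apply]
  simp [Fin.val_add]

section Value
variable {Γ : Type*} [Group Γ] [Fintype Γ] [DecidableEq Γ]

private lemma sign_mulRight_zpowers (g : Γ) (h2 : Even (orderOf g)) :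
    Equiv.Perm.sign (Equiv.mulRight (⟨g, Subgroup.mem_zpowers g⟩ : Subgroup.zpowers g)) = -1 := by
  obtain ⟨k, hk⟩ : ∃ k, orderOf g = k + 1 := ⟨orderOf g - 1, by have := orderOf_pos g; omega⟩
  have hkodd : Odd k := by
    rcases Nat.even_or_odd k with he | ho
    · exfalso; rw [hk, Nat.even_add_one] at h2; exact h2 he
    · exact ho
  have hfin : IsOfFinOrder g := isOfFinOrder_of_finite g
  set g1 : Subgroup.zpowers g := ⟨g, Subgroup.mem_zpowers g⟩ with hg1
  let e2 : Fin (orderOf g) ≃ Subgroup.zpowers g := finEquivZPowers hfin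
  have key : ((e2.trans (Equiv.mulRight g1)).trans e2.symm) = finRotate (orderOf g) := by
    apply Equiv.ext; intro i
    simp only [Equiv.trans_apply]
    rw [Equiv.symm_apply_eq]
    show (e2 i) * g1 = e2 (finRotate (orderOf g) i)
    apply Subtype.ext
    show ((e2 i : Γ)) * g = (e2 (finRotate (orderOf g) i) : Γ)
    rw [show (e2 i : Γ) = g ^ ((i : ℕ)) from rfl,
      show (e2 (finRotate (orderOf g) i) : Γ) = g ^ ((finRotate (orderOf g) i : Fin _) : ℕ) from rfl,
      finRotate_val k hk i, pow_mod_orderOf, pow_succ]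
  calc Equiv.Perm.sign (Equiv.mulRight g1)
      = Equiv.Perm.sign ((e2.trans (Equiv.mulRight g1)).trans e2.symm) :=
        (Equiv.Perm.sign_trans_trans_symm _ e2).symm
    _ = Equiv.Perm.sign (finRotate (orderOf g)) := by rw [key]
    _ = -1 := by rw [hk, sign_finRotate]; exact Odd.neg_one_pow hkodd

end Value

section Value2
variable {Γ : Type*} [Group Γ] [Fintype Γ] [DecidableEq Γ]

private lemma regularSign_eq_neg_one (g : Γ) (h2 : Even (orderOf g))
    (h3 : Odd (Fintype.card Γ / orderOf g)) : regularSign Γ g = -1 := by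
  classical
  set Z : Subgroup Γ := Subgroup.zpowers g with hZdef
  set g1 : Z := ⟨g, Subgroup.mem_zpowers g⟩ with hg1
  -- the coset decomposition equiv
  let r : Γ ⧸ Z → Γ := Quotient.out
  have hr : ∀ q : Γ ⧸ Z, (QuotientGroup.mk (r q) : Γ ⧸ Z) = q := fun q => QuotientGroup.out_eq' q
  have hmem : ∀ a : Γ, (r (QuotientGroup.mk a))⁻¹ * a ∈ Z := by
    intro a
    rw [← QuotientGroup.eq]
    exact hr _
  let e : Γ ≃ (Γ ⧸ Z) × Z :=
    { toFun := fun a => (QuotientGroup.mk a, ⟨(r (QuotientGroup.mk a))⁻¹ * a, hmem a⟩)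
      invFun := fun p => r p.1 * (p.2 : Γ)
      left_inv := fun a => by simp
      right_inv := fun p => by
        have h1 : (QuotientGroup.mk (r p.1 * (p.2 : Γ)) : Γ ⧸ Z) = p.1 := by
          rw [QuotientGroup.mk_mul_of_mem _ p.2.2]; exact hr _
        refine Prod.ext h1 (Subtype.ext ?_)
        show (r (QuotientGroup.mk (r p.1 * (p.2 : Γ))))⁻¹ * (r p.1 * (p.2 : Γ)) = (p.2 : Γ)
        rw [h1, inv_mul_cancel_left] }
  have key : ((e.symm.trans (Equiv.mulRight g)).trans e)
      = Equiv.prodCongrRight (fun _ : Γ ⧸ Z => Equiv.mulRight g1) := by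
    apply Equiv.ext
    rintro ⟨q, z⟩
    simp only [Equiv.trans_apply]
    have hsymm : e.symm (q, z) = r q * (z : Γ) := rfl
    have hq : (QuotientGroup.mk (r q * (z : Γ) * g) : Γ ⧸ Z) = q := by
      rw [mul_assoc, QuotientGroup.mk_mul_of_mem _ (Z.mul_mem z.2 (Subgroup.mem_zpowers g))]
      exact hr q
    rw [hsymm]
    show (QuotientGroup.mk (r q * (z : Γ) * g),
        (⟨(r (QuotientGroup.mk (r q * (z : Γ) * g)))⁻¹ * (r q * (z : Γ) * g), hmem _⟩ : Z))
      = (q, z * g1)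
    refine Prod.ext hq (Subtype.ext ?_)
    show (r (QuotientGroup.mk (r q * (z : Γ) * g)))⁻¹ * (r q * (z : Γ) * g) = (z : Γ) * g
    rw [hq, ← mul_assoc, inv_mul_cancel_left]
  have step1 : regularSign Γ g
      = (Equiv.Perm.sign (Equiv.mulRight g1)) ^ (Fintype.card (Γ ⧸ Z)) := by
    show Equiv.Perm.sign (Equiv.mulRight g) = _
    rw [← Equiv.Perm.sign_symm_trans_trans (Equiv.mulRight g) e, key,
      Equiv.Perm.sign_prodCongrRight]
    rw [Finset.prod_const, Finset.card_univ]
  have hcard : Fintype.card (Γ ⧸ Z) = Fintype.card Γ / orderOf g := by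
    have h1 : Fintype.card Γ = Fintype.card (Γ ⧸ Z) * Fintype.card Z := by
      have := Subgroup.card_eq_card_quotient_mul_card_subgroup Z
      simpa [Nat.card_eq_fintype_card] using this
    have h2 : Fintype.card Z = orderOf g := by
      rw [← Nat.card_eq_fintype_card, Nat.card_zpowers]
    rw [h1, h2, Nat.mul_div_cancel _ (orderOf_pos g)]
  rw [step1, sign_mulRight_zpowers g h2, hcard]
  exact Odd.neg_one_pow h3

end Value2

private lemma aux_main {Γ : Type*} [Group Γ] [Finite Γ] (α : Γ ≃* Γ) (x y : Γ)
    (hy : y = x⁻¹ * α x) (h2 : Even (orderOf y)) (h3 : Odd (Nat.card Γ / orderOf y)) :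
    False := by
  classical
  letI : Fintype Γ := Fintype.ofFinite Γ
  have h1 : regularSign Γ y = 1 := by
    rw [hy, map_mul, map_inv, regularSign_apply_mulequiv, inv_mul_cancel]
  have h4 : regularSign Γ y = -1 := by
    apply regularSign_eq_neg_one y h2
    rwa [← Nat.card_eq_fintype_card]
  rw [h1] at h4
  exact absurd h4 (by decide)

/-- If `p` is an odd prime and the finite group `G` is a `𝒫₀(p)`-group with respect to
`(ρ, τ)`, then `G = ⟨[ρ,τ], ρ⟩`. -/
theorem stmt0 {G : Type*} [Group G] [Finite G] {p : ℕ} (hp : p.Prime) (hodd : Odd p)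
    (ρ τ : G) (h : IsP0 p ρ τ) :
    Subgroup.closure {ρ⁻¹ * τ⁻¹ * ρ * τ, ρ} = ⊤ := by
  classical
  obtain ⟨hτ2, hgen, n, hn, heq⟩ := h
  by_contra hH
  -- basic facts about τ
  have hττ : τ * τ = 1 := by
    have := pow_orderOf_eq_one τ
    rwa [hτ2, sq] at this
  have hτinv : τ⁻¹ = τ := by
    rw [inv_eq_iff_mul_eq_one, hττ]
  have hτself : ∀ x : G, τ * (τ * x) = x := fun x => by rw [← mul_assoc, hττ, one_mul]
  set c : G := ρ⁻¹ * τ⁻¹ * ρ * τ with hcdef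
  have hc2 : c = ρ⁻¹ * τ * ρ * τ := by rw [hcdef, hτinv]
  set H : Subgroup G := Subgroup.closure {c, ρ} with hHdef
  have hρH : ρ ∈ H := Subgroup.subset_closure (by right; rfl)
  have hcH : c ∈ H := Subgroup.subset_closure (by left; rfl)
  -- τ-conjugation preserves H
  have hconj : ∀ x ∈ H, τ * x * τ⁻¹ ∈ H := by
    intro x hx
    induction hx using Subgroup.closure_induction with
    | mem y hy =>
      rcases hy with hy | hy
      · have : τ * y * τ⁻¹ = c⁻¹ := by
          subst hy
          rw [hc2, hτinv]
          simp [mul_assoc, hτself, hττ, hτinv]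
        rw [this]; exact H.inv_mem hcH
      · have : τ * y * τ⁻¹ = ρ * c := by
          subst hy
          rw [hc2, hτinv]
          simp [mul_assoc, hτself, hττ, hτinv]
        rw [this]; exact H.mul_mem hρH hcH
    | one => simpa using H.one_mem
    | mul y z _ _ hy hz =>
      have hmul : τ * (y * z) * τ⁻¹ = (τ * y * τ⁻¹) * (τ * z * τ⁻¹) := by group
      rw [hmul]; exact H.mul_mem hy hz
    | inv y _ hy =>
      have hinv : τ * y⁻¹ * τ⁻¹ = (τ * y * τ⁻¹)⁻¹ := by group
      rw [hinv]; exact H.inv_mem hy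
  have hnorm : H.Normal := by
    rw [← Subgroup.normalizer_eq_top_iff, eq_top_iff, ← hgen, Subgroup.closure_le]
    rintro g (hg | hg)
    · exact hg ▸ Subgroup.le_normalizer hρH
    · rw [hg, SetLike.mem_coe, Subgroup.mem_normalizer_iff]
      intro x
      constructor
      · intro hx
        simpa using hconj x hx
      · intro hx
        have := hconj _ hx
        rwa [show τ * (τ * x * τ⁻¹) * τ⁻¹ = x from by
          simp [mul_assoc, hτself, hττ, hτinv]] at this
  haveI := hnorm
  -- τ is not in H
  have hτH : τ ∉ H := by
    intro hτmem
    apply hH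
    rw [eq_top_iff, ← hgen, Subgroup.closure_le]
    rintro g (hg | hg)
    · exact hg ▸ hρH
    · exact hg ▸ hτmem
  -- H has index 2
  have hidx : H.index = 2 := by
    set t : G ⧸ H := QuotientGroup.mk' H τ with htdef
    have ht1 : t ≠ 1 := by
      rw [htdef, ne_eq, QuotientGroup.mk'_apply, QuotientGroup.eq_one_iff]
      exact hτH
    have ht2 : t ^ 2 = 1 := by
      rw [htdef, ← map_pow, sq, hττ, map_one]
    haveI : Fact (Nat.Prime 2) := ⟨Nat.prime_two⟩
    have hot : orderOf t = 2 := orderOf_eq_prime ht2 ht1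
    have htop : Subgroup.zpowers t = ⊤ := by
      rw [eq_top_iff]
      intro q hq
      obtain ⟨g, rfl⟩ := QuotientGroup.mk'_surjective H q
      clear hq
      have hg : g ∈ Subgroup.closure ({ρ, τ} : Set G) := hgen ▸ Subgroup.mem_top g
      induction hg using Subgroup.closure_induction with
      | mem y hy =>
        rcases hy with hy | hy
        · rw [hy, show QuotientGroup.mk' H ρ = 1 from by
            rw [QuotientGroup.mk'_apply, QuotientGroup.eq_one_iff]; exact hρH]
          exact Subgroup.one_mem _
        · rw [hy]; exact Subgroup.mem_zpowers t
      | one => rw [map_one]; exact Subgroup.one_mem _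
      | mul y z _ _ hy hz => rw [map_mul]; exact Subgroup.mul_mem _ hy hz
      | inv y _ hy => rw [map_inv]; exact Subgroup.inv_mem _ hy
    rw [Subgroup.index_eq_card, ← Subgroup.card_top, ← htop, Nat.card_zpowers, hot]
  -- cardinalities
  set D : Subgroup G := Subgroup.closure {τ, ρ⁻¹ * τ * ρ} with hDdef
  have hNpos : 0 < Nat.card G := Nat.card_pos
  have hhpos : 0 < Nat.card H := Nat.card_pos
  have hN2 : Nat.card H * 2 = Nat.card G := by
    have := H.card_mul_index
    rwa [hidx] at this
  have hapos : 0 < orderOf ρ := orderOf_pos ρ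
  have hah : orderOf ρ ∣ Nat.card H := by
    have := orderOf_dvd_natCard (⟨ρ, hρH⟩ : H)
    rwa [Subgroup.orderOf_mk] at this
  have haN : orderOf ρ ∣ Nat.card G := orderOf_dvd_natCard ρ
  have hA : Nat.card G / orderOf ρ * orderOf ρ = Nat.card G := Nat.div_mul_cancel haN
  obtain ⟨u, hu⟩ := hah
  have hAval : Nat.card G / orderOf ρ = 2 * u := by
    apply Nat.eq_of_mul_eq_mul_right hapos
    rw [hA, ← hN2, hu]; ring
  have hτD : τ ∈ D := Subgroup.subset_closure (by left; rfl)
  have h2d : 2 ∣ Nat.card D := by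
    have := orderOf_dvd_natCard (⟨τ, hτD⟩ : D)
    rwa [Subgroup.orderOf_mk, hτ2] at this
  have hdpos : 0 < Nat.card D := Nat.card_pos
  have hdN : Nat.card D ∣ Nat.card G := Subgroup.card_subgroup_dvd_card D
  have hB : Nat.card G / Nat.card D * Nat.card D = Nat.card G := Nat.div_mul_cancel hdN
  have hhalf : Nat.card G / 2 = Nat.card H := by omega
  obtain ⟨d', hd'⟩ := h2d
  have hBd' : (Nat.card G / Nat.card D) * d' = Nat.card H := by
    apply Nat.eq_of_mul_eq_mul_right (show 0 < 2 by norm_num)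
    calc (Nat.card G / Nat.card D) * d' * 2
        = (Nat.card G / Nat.card D) * Nat.card D := by rw [hd']; ring
      _ = Nat.card G := hB
      _ = Nat.card H * 2 := hN2.symm
  have hpnodd : Odd (p ^ n) := hodd.pow
  rw [hAval, hhalf] at heq
  -- B is odd and |H| is even
  have hBodd : Odd (Nat.card G / Nat.card D) := by
    rcases Nat.even_or_odd (Nat.card G / Nat.card D) with ⟨w, hw⟩ | ho
    · exfalso
      have hh2 : Nat.card H = 2 * (w * d') := by rw [← hBd', hw]; ring
      obtain ⟨v, hv⟩ := hpnodd
      omega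
    · exact ho
  have hheven : Even (Nat.card H) := by
    obtain ⟨w, hw⟩ := hBodd
    obtain ⟨v, hv⟩ := hpnodd
    rw [Nat.even_iff]; omega
  -- the element c' and the dihedral bound on D
  set c' : G := τ * (ρ⁻¹ * τ * ρ) with hc'def
  have hc'D : c' ∈ D := D.mul_mem (Subgroup.subset_closure (by left; rfl))
    (Subgroup.subset_closure (by right; rfl))
  have hcc' : c * c' = 1 := by
    rw [hc2, hc'def]
    simp [mul_assoc, hτself, hττ, hτinv]
  have hc'inv : c' = c⁻¹ := eq_inv_of_mul_eq_one_right hcc'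
  have hmc' : orderOf c' = orderOf c := by rw [hc'inv, orderOf_inv]
  have hmpos : 0 < orderOf c := orderOf_pos c
  have hmh : orderOf c ∣ Nat.card H := by
    have := orderOf_dvd_natCard (⟨c, hcH⟩ : H)
    rwa [Subgroup.orderOf_mk] at this
  have hmd : orderOf c ∣ Nat.card D := by
    have := orderOf_dvd_natCard (⟨c', hc'D⟩ : D)
    rwa [Subgroup.orderOf_mk, hmc'] at this
  have hbase : τ * c' * τ⁻¹ = c'⁻¹ := by
    rw [hc'def, hτinv]
    simp [mul_assoc, hτself, hττ, hτinv, mul_inv_rev]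
  have hconjc' : ∀ i : ℤ, τ * c' ^ i = c' ^ (-i) * τ := by
    intro i
    have h1 : τ * c' ^ i * τ⁻¹ = c' ^ (-i) := by
      have : (MulAut.conj τ) (c' ^ i) = ((MulAut.conj τ) c') ^ i := map_zpow _ _ _
      rw [MulAut.conj_apply, MulAut.conj_apply] at this
      rw [this, hbase, inv_zpow, zpow_neg]
    calc τ * c' ^ i = (τ * c' ^ i * τ⁻¹) * τ := by group
      _ = c' ^ (-i) * τ := by rw [h1]
  let K : Subgroup G :=
    { carrier := {x | ∃ i : ℤ, x = c' ^ i ∨ x = c' ^ i * τ}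
      one_mem' := ⟨0, Or.inl (by simp)⟩
      mul_mem' := by
        rintro x y ⟨i, hi | hi⟩ ⟨j, hj | hj⟩ <;> subst hi <;> subst hj
        · exact ⟨i + j, Or.inl (zpow_add c' i j).symm⟩
        · exact ⟨i + j, Or.inr (by rw [← mul_assoc, ← zpow_add])⟩
        · refine ⟨i - j, Or.inr ?_⟩
          rw [mul_assoc, hconjc' j, ← mul_assoc, ← zpow_add, ← sub_eq_add_neg]
        · refine ⟨i - j, Or.inl ?_⟩
          have hstep4 : τ * (c' ^ j * τ) = c' ^ (-j) := by
            rw [← mul_assoc, hconjc' j, mul_assoc, hττ, mul_one]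
          rw [mul_assoc, hstep4, ← zpow_add, ← sub_eq_add_neg]
      inv_mem' := by
        rintro x ⟨i, hi | hi⟩ <;> subst hi
        · exact ⟨-i, Or.inl (by rw [zpow_neg])⟩
        · refine ⟨i, Or.inr ?_⟩
          rw [mul_inv_rev, hτinv, ← zpow_neg, hconjc' (-i), neg_neg] }
  have hDK : D ≤ K := by
    rw [hDdef, Subgroup.closure_le]
    rintro g (hg | hg)
    · subst hg
      exact ⟨0, Or.inr (by simp)⟩
    · subst hg
      have hstep : ρ⁻¹ * τ * ρ = τ * c' := by
        rw [hc'def]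
        simp [mul_assoc, hτself]
      refine ⟨-1, Or.inr ?_⟩
      rw [hstep, show τ * c' = τ * c' ^ (1 : ℤ) by rw [zpow_one], hconjc' 1]
  have hmemK : ∀ (z : Subgroup.zpowers c') (b : Bool), (z : G) * (cond b τ 1) ∈ K := by
    intro z b
    obtain ⟨i, hi⟩ := Subgroup.mem_zpowers_iff.mp z.2
    cases b
    · exact ⟨i, Or.inl (by rw [← hi]; simp)⟩
    · exact ⟨i, Or.inr (by rw [← hi]; simp)⟩
  have hcardK : Nat.card K ≤ orderOf c * 2 := by
    let f : (Subgroup.zpowers c') × Bool → K :=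
      fun zb => ⟨(zb.1 : G) * (cond zb.2 τ 1), hmemK zb.1 zb.2⟩
    have hsurj : Function.Surjective f := by
      rintro ⟨x, i, hx | hx⟩
      · exact ⟨(⟨c' ^ i, Subgroup.zpow_mem _ (Subgroup.mem_zpowers c') i⟩, false),
          Subtype.ext (by simp [f, hx])⟩
      · exact ⟨(⟨c' ^ i, Subgroup.zpow_mem _ (Subgroup.mem_zpowers c') i⟩, true),
          Subtype.ext (by simp [f, hx])⟩
    calc Nat.card K ≤ Nat.card ((Subgroup.zpowers c') × Bool) :=
          Nat.card_le_card_of_surjective f hsurj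
      _ = orderOf c * 2 := by
          rw [Nat.card_prod, Nat.card_zpowers, hmc']
          simp [Nat.card_eq_fintype_card]
  have hdK : Nat.card D ≤ orderOf c * 2 := by
    have h1 : Nat.card D ∣ Nat.card K := Subgroup.card_dvd_of_le hDK
    have h2 : 0 < Nat.card K := Nat.card_pos
    exact le_trans (Nat.le_of_dvd h2 h1) hcardK
  obtain ⟨e, he⟩ := hmd
  have hepos : 0 < e := by
    rcases Nat.eq_zero_or_pos e with h0 | h0
    · exfalso; rw [h0, mul_zero] at he; omega
    · exact h0
  have hele2 : e ≤ 2 := by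
    refine Nat.le_of_mul_le_mul_left ?_ hmpos
    calc orderOf c * e = Nat.card D := he.symm
      _ ≤ orderOf c * 2 := hdK
  interval_cases e
  · -- card D = orderOf c, which divides card H : contradiction with B odd
    exfalso
    rw [mul_one] at he
    obtain ⟨w, hw⟩ := hmh
    have hBval : Nat.card G / Nat.card D = 2 * w := by
      apply Nat.eq_of_mul_eq_mul_right hmpos
      calc Nat.card G / Nat.card D * orderOf c
          = Nat.card G / Nat.card D * Nat.card D := by rw [he]
        _ = Nat.card G := hB
        _ = Nat.card H * 2 := hN2.symm
        _ = 2 * w * orderOf c := by rw [hw]; ring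
    obtain ⟨w', hw'⟩ := hBodd
    omega
  · -- card D = 2 * orderOf c
    have hBm : Nat.card G / Nat.card D * orderOf c = Nat.card H := by
      apply Nat.eq_of_mul_eq_mul_right (show 0 < 2 by norm_num)
      calc Nat.card G / Nat.card D * orderOf c * 2
          = Nat.card G / Nat.card D * Nat.card D := by rw [he]; ring
        _ = Nat.card G := hB
        _ = Nat.card H * 2 := hN2.symm
    have hmeven : Even (orderOf c) := by
      rcases Nat.even_or_odd (orderOf c) with he' | ho'
      · exact he'
      · exfalso
        have : Odd (Nat.card H) := hBm ▸ hBodd.mul ho'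
        exact (Nat.not_odd_iff_even.mpr hheven) this
    have hquot : Nat.card H / orderOf c = Nat.card G / Nat.card D := by
      rw [← hBm, Nat.mul_div_cancel _ hmpos]
    -- final contradiction via the regular representation sign
    refine aux_main (Γ := H) (MulAut.conjNormal τ) ⟨ρ, hρH⟩ ⟨c, hcH⟩ ?_ ?_ ?_
    · apply Subtype.ext
      push_cast
      rw [MulAut.conjNormal_apply]
      rw [hc2, hτinv]
      group
    · rwa [Subgroup.orderOf_mk]
    · rw [Subgroup.orderOf_mk, hquot]
      exact hBodd
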